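/- Let A = UΣVᵀ be a singular value decomposition of A ∈ ℝ^{n×d} (U ∈ ℝ^{n×ρ}, Σ ∈ ℝ^{ρ×ρ} positive diagonal, V ∈ ℝ^{d×ρ} with orthonormal columns), let λ = 1, b ∈ ℝ^n, and let S ∈ ℝ^{m×d} satisfy ‖VᵀSᵀSV − I‖_op ≤ 1/2 and ‖VᵀSᵀSVv − v‖ ≤ √ε·‖v‖ where v = (I + Σ⁻²)⁻¹Σ⁻¹Uᵀb. Then x̃ = Aᵀ(ASᵀSAᵀ + I)⁻¹b and x* = Aᵀ(AAᵀ + I)⁻¹b satisfy ‖x̃ − x*‖ ≤ 2√ε·‖x*‖. -/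

import Mathlib

open Matrix

private lemma matCancel {p q r : ℕ} {B : Matrix (Fin p) (Fin q) ℝ} {C : Matrix (Fin q) (Fin p) ℝ}
    (h : C * B = 1) (X : Matrix (Fin q) (Fin r) ℝ) : C * (B * X) = X := by
  rw [← Matrix.mul_assoc, h, Matrix.one_mul]

private lemma sumCS {k : ℕ} (f g : Fin k → ℝ) :
    ∑ i, f i * g i ≤ Real.sqrt (∑ i, f i ^ 2) * Real.sqrt (∑ i, g i ^ 2) := by
  have h := Finset.sum_mul_sq_le_sq_mul_sq Finset.univ f g
  calc ∑ i, f i * g i ≤ |∑ i, f i * g i| := le_abs_self _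
    _ = Real.sqrt ((∑ i, f i * g i) ^ 2) := (Real.sqrt_sq_eq_abs _).symm
    _ ≤ Real.sqrt ((∑ i, f i ^ 2) * ∑ i, g i ^ 2) := Real.sqrt_le_sqrt h
    _ = _ := Real.sqrt_mul (Finset.sum_nonneg fun i _ => sq_nonneg _) _

set_option maxHeartbeats 1000000 in

/-- If `A = U Sig Vᵀ` is an SVD, `l = 1`, and `S` satisfies
`‖VᵀSᵀSV - I‖_op ≤ 1/2` and `‖VᵀSᵀSV v - v‖ ≤ √ε ‖v‖` for
`v = (I + Sig⁻²)⁻¹ Sig⁻¹ Uᵀ b`, then the sketched ridge solution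
`x̃ = Aᵀ(ASᵀSAᵀ + I)⁻¹ b` satisfies `‖x̃ - x*‖ ≤ 2√ε ‖x*‖`. -/
theorem sketched_ridge_solution_error
    (n d ρ m : ℕ)
    (A : Matrix (Fin n) (Fin d) ℝ)
    (U : Matrix (Fin n) (Fin ρ) ℝ) (D : Fin ρ → ℝ) (hD : ∀ i, 0 < D i)
    (Sig : Matrix (Fin ρ) (Fin ρ) ℝ) (hSig : Sig = Matrix.diagonal D)
    (V : Matrix (Fin d) (Fin ρ) ℝ)
    (hSVD : A = U * Sig * Vᵀ)
    (hU : Uᵀ * U = 1) (hV : Vᵀ * V = 1)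
    (b : Fin n → ℝ) (S : Matrix (Fin m) (Fin d) ℝ)
    (ε : ℝ) (hε : 0 ≤ ε)
    (hSE : ‖(LinearMap.toContinuousLinearMap
        (Matrix.toEuclideanLin (Vᵀ * Sᵀ * S * V - 1) :
          EuclideanSpace ℝ (Fin ρ) →ₗ[ℝ] EuclideanSpace ℝ (Fin ρ)))‖ ≤ 1 / 2)
    (v : Fin ρ → ℝ)
    (hv : v = (((1 : Matrix (Fin ρ) (Fin ρ) ℝ) + (Sig ^ 2)⁻¹)⁻¹ * Sig⁻¹ * Uᵀ).mulVec b)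
    (hAMM : Real.sqrt (∑ i, ((Vᵀ * Sᵀ * S * V).mulVec v i - v i) ^ 2)
        ≤ Real.sqrt ε * Real.sqrt (∑ i, v i ^ 2))
    (xt xstar : Fin d → ℝ)
    (hxt : xt = (Aᵀ * (A * Sᵀ * S * Aᵀ + 1)⁻¹).mulVec b)
    (hxstar : xstar = (Aᵀ * (A * Aᵀ + 1)⁻¹).mulVec b) :
    Real.sqrt (∑ j, (xt j - xstar j) ^ 2)
      ≤ 2 * Real.sqrt ε * Real.sqrt (∑ j, xstar j ^ 2) := by
  have hDne : ∀ i, D i ≠ 0 := fun i => (hD i).ne'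
  set M := Vᵀ * Sᵀ * S * V with hMdef
  set Q := (Sig ^ 2)⁻¹ with hQdef
  set P := (1 : Matrix (Fin ρ) (Fin ρ) ℝ) + Q with hPdef
  set W := Sig ^ 2 + (1 : Matrix (Fin ρ) (Fin ρ) ℝ) with hWdef
  set N := M + Q with hNdef
  set K := Sig * M * Sig + (1 : Matrix (Fin ρ) (Fin ρ) ℝ) with hKdef
  set G := A * Aᵀ + (1 : Matrix (Fin n) (Fin n) ℝ) with hGdef
  set H := A * Sᵀ * S * Aᵀ + (1 : Matrix (Fin n) (Fin n) ℝ) with hHdef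
  -- diagonal computations
  have hSt : Sigᵀ = Sig := by rw [hSig, diagonal_transpose]
  have hSinv : Sig⁻¹ = diagonal (fun i => (D i)⁻¹) := by
    apply inv_eq_right_inv
    rw [hSig, diagonal_mul_diagonal,
      show (fun i => D i * (D i)⁻¹) = fun _ => (1:ℝ) from funext fun i => mul_inv_cancel₀ (hDne i),
      diagonal_one]
  have hS2 : Sig ^ 2 = diagonal (fun i => D i ^ 2) := by
    rw [hSig, sq, diagonal_mul_diagonal]
    exact congrArg Matrix.diagonal (funext fun i => (sq (D i)).symm)
  have hQd : Q = diagonal (fun i => (D i ^ 2)⁻¹) := by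
    rw [hQdef]
    apply inv_eq_right_inv
    rw [hS2, diagonal_mul_diagonal,
      show (fun i => D i ^ 2 * (D i ^ 2)⁻¹) = fun _ => (1:ℝ) from
        funext fun i => mul_inv_cancel₀ (pow_ne_zero 2 (hDne i)),
      diagonal_one]
  have hPd : P = diagonal (fun i => 1 + (D i ^ 2)⁻¹) := by
    rw [hPdef, hQd, ← diagonal_one, diagonal_add]
  have hWd : W = diagonal (fun i => D i ^ 2 + 1) := by
    rw [hWdef, hS2, ← diagonal_one, diagonal_add]
  have hPinv : P⁻¹ = diagonal (fun i => (1 + (D i ^ 2)⁻¹)⁻¹) := by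
    apply inv_eq_right_inv
    rw [hPd, diagonal_mul_diagonal,
      show (fun i => (1 + (D i ^ 2)⁻¹) * (1 + (D i ^ 2)⁻¹)⁻¹) = fun _ => (1:ℝ) from
        funext fun i => mul_inv_cancel₀ (by positivity),
      diagonal_one]
  have hWinv : W⁻¹ = diagonal (fun i => (D i ^ 2 + 1)⁻¹) := by
    apply inv_eq_right_inv
    rw [hWd, diagonal_mul_diagonal,
      show (fun i => (D i ^ 2 + 1) * (D i ^ 2 + 1)⁻¹) = fun _ => (1:ℝ) from
        funext fun i => mul_inv_cancel₀ (by positivity),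
      diagonal_one]
  -- invertibility / positivity
  have hSdet : IsUnit Sig.det := by
    rw [hSig, det_diagonal]
    exact (Finset.prod_ne_zero_iff.mpr fun i _ => hDne i).isUnit
  have h1pd : (1 : Matrix (Fin ρ) (Fin ρ) ℝ).PosDef := by
    rw [← diagonal_one]; exact Matrix.PosDef.diagonal fun i => one_pos
  have h1pdn : (1 : Matrix (Fin n) (Fin n) ℝ).PosDef := by
    rw [← diagonal_one]; exact Matrix.PosDef.diagonal fun i => one_pos
  have hMps : M.PosSemidef := by
    have h := Matrix.posSemidef_conjTranspose_mul_self (S * V)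
    rw [conjTranspose_eq_transpose_of_trivial] at h
    have hM' : M = (S * V)ᵀ * (S * V) := by
      rw [hMdef, transpose_mul, Matrix.mul_assoc, Matrix.mul_assoc]
    rw [hM']; exact h
  have hQpd : Q.PosDef := by
    rw [hQd]; exact Matrix.PosDef.diagonal fun i => inv_pos.mpr (pow_pos (hD i) 2)
  have hNpd : N.PosDef := Matrix.PosDef.posSemidef_add hMps hQpd
  have hNdet : IsUnit N.det := hNpd.det_pos.ne'.isUnit
  have hPdet : IsUnit P.det := by
    have : P.PosDef := by rw [hPd]; exact Matrix.PosDef.diagonal fun i => by positivity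
    exact this.det_pos.ne'.isUnit
  have hWdet : IsUnit W.det := by
    have : W.PosDef := by rw [hWd]; exact Matrix.PosDef.diagonal fun i => by positivity
    exact this.det_pos.ne'.isUnit
  have hGdet : IsUnit G.det := by
    have h := Matrix.posSemidef_self_mul_conjTranspose A
    rw [conjTranspose_eq_transpose_of_trivial] at h
    exact (Matrix.PosDef.posSemidef_add h h1pdn).det_pos.ne'.isUnit
  have hHdet : IsUnit H.det := by
    have h := Matrix.posSemidef_conjTranspose_mul_self (S * Aᵀ)
    rw [conjTranspose_eq_transpose_of_trivial] at h
    have hH' : A * Sᵀ * S * Aᵀ = (S * Aᵀ)ᵀ * (S * Aᵀ) := by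
      simp only [transpose_mul, transpose_transpose, Matrix.mul_assoc]
    rw [hHdef, hH']
    exact (Matrix.PosDef.posSemidef_add h h1pdn).det_pos.ne'.isUnit
  have hKdet : IsUnit K.det := by
    have h := Matrix.posSemidef_conjTranspose_mul_self (S * V * Sig)
    rw [conjTranspose_eq_transpose_of_trivial] at h
    have hK' : Sig * M * Sig = (S * V * Sig)ᵀ * (S * V * Sig) := by
      simp only [hMdef, transpose_mul, transpose_transpose, hSt, Matrix.mul_assoc]
    rw [hKdef, hK']
    exact (Matrix.PosDef.posSemidef_add h h1pd).det_pos.ne'.isUnit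
  -- structural identities
  have hAt : Aᵀ = V * (Sig * Uᵀ) := by
    rw [hSVD]; simp only [transpose_mul, transpose_transpose, hSt, Matrix.mul_assoc]
  have hAAT : A * Aᵀ = U * (Sig ^ 2 * Uᵀ) := by
    rw [hSVD, sq]
    simp only [transpose_mul, transpose_transpose, hSt, Matrix.mul_assoc, matCancel hV]
  have hASAT : A * Sᵀ * S * Aᵀ = U * (Sig * (M * (Sig * Uᵀ))) := by
    rw [hSVD, hMdef]
    simp only [transpose_mul, transpose_transpose, hSt, Matrix.mul_assoc]
  -- key identity 1
  have key1 : (V * (Sig * (W⁻¹ * Uᵀ))) * G = Aᵀ := by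
    have h1 : W⁻¹ * (Sig ^ 2 * Uᵀ) + W⁻¹ * Uᵀ = Uᵀ := by
      rw [← Matrix.mul_add]
      have h2 : Sig ^ 2 * Uᵀ + Uᵀ = W * Uᵀ := by
        rw [hWdef, Matrix.add_mul, Matrix.one_mul]
      rw [h2, matCancel (nonsing_inv_mul W hWdet) Uᵀ]
    calc (V * (Sig * (W⁻¹ * Uᵀ))) * G
        = V * (Sig * (W⁻¹ * (Sig ^ 2 * Uᵀ) + W⁻¹ * Uᵀ)) := by
          rw [hGdef, hAAT, Matrix.mul_add, Matrix.mul_one]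
          simp only [Matrix.mul_add, Matrix.mul_assoc, matCancel hU]
      _ = V * (Sig * Uᵀ) := by rw [h1]
      _ = Aᵀ := hAt.symm
  have key2 : (V * (Sig * (K⁻¹ * Uᵀ))) * H = Aᵀ := by
    have h1 : K⁻¹ * (Sig * (M * (Sig * Uᵀ))) + K⁻¹ * Uᵀ = Uᵀ := by
      rw [← Matrix.mul_add]
      have h2 : Sig * (M * (Sig * Uᵀ)) + Uᵀ = K * Uᵀ := by
        rw [hKdef, Matrix.add_mul, Matrix.one_mul]
        simp only [Matrix.mul_assoc]
      rw [h2, matCancel (nonsing_inv_mul K hKdet) Uᵀ]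
    calc (V * (Sig * (K⁻¹ * Uᵀ))) * H
        = V * (Sig * (K⁻¹ * (Sig * (M * (Sig * Uᵀ))) + K⁻¹ * Uᵀ)) := by
          rw [hHdef, hASAT, Matrix.mul_add, Matrix.mul_one]
          simp only [Matrix.mul_add, Matrix.mul_assoc, matCancel hU]
      _ = V * (Sig * Uᵀ) := by rw [h1]
      _ = Aᵀ := hAt.symm
  have hAG : Aᵀ * G⁻¹ = V * (Sig * (W⁻¹ * Uᵀ)) := by
    conv_lhs => rw [← key1]
    rw [Matrix.mul_assoc, mul_nonsing_inv G hGdet, Matrix.mul_one]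
  have hAH : Aᵀ * H⁻¹ = V * (Sig * (K⁻¹ * Uᵀ)) := by
    conv_lhs => rw [← key2]
    rw [Matrix.mul_assoc, mul_nonsing_inv H hHdet, Matrix.mul_one]
  -- diagonal identity: Sig * W⁻¹ = P⁻¹ * Sig⁻¹
  have hdiag1 : Sig * W⁻¹ = P⁻¹ * Sig⁻¹ := by
    rw [hWinv, hPinv, hSinv, hSig, diagonal_mul_diagonal, diagonal_mul_diagonal]
    refine congrArg Matrix.diagonal (funext fun i => ?_)
    have h1 : D i ≠ 0 := hDne i
    field_simp
  -- K = Sig * (N * Sig) and Sig * K⁻¹ = N⁻¹ * Sig⁻¹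
  have hSQS : Sig * (Q * Sig) = 1 := by
    rw [hQd, hSig, diagonal_mul_diagonal, diagonal_mul_diagonal, ← diagonal_one]
    refine congrArg Matrix.diagonal (funext fun i => ?_)
    have h1 : D i ≠ 0 := hDne i
    field_simp
  have hKN : K = Sig * (N * Sig) := by
    rw [hKdef, hNdef, Matrix.add_mul, Matrix.mul_add, hSQS, Matrix.mul_assoc]
  have hdiag2 : Sig * K⁻¹ = N⁻¹ * Sig⁻¹ := by
    rw [hKN, Matrix.mul_inv_rev, Matrix.mul_inv_rev]
    simp only [Matrix.mul_assoc, matCancel (mul_nonsing_inv Sig hSdet)]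
  -- solution formulas
  set vt := (N⁻¹ * (Sig⁻¹ * Uᵀ)).mulVec b with hvtdef
  have hd1' : Sig * (W⁻¹ * Uᵀ) = P⁻¹ * Sig⁻¹ * Uᵀ := by
    rw [← Matrix.mul_assoc, hdiag1]
  have hxstarv : xstar = V.mulVec v := by
    rw [hxstar, hAG, hd1', hv, mulVec_mulVec]
  have hd2' : Sig * (K⁻¹ * Uᵀ) = N⁻¹ * (Sig⁻¹ * Uᵀ) := by
    rw [← Matrix.mul_assoc, hdiag2, Matrix.mul_assoc]
  have hxtv : xt = V.mulVec vt := by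
    rw [hxt, hAH, hd2', hvtdef, mulVec_mulVec]
  -- vector identities
  have hNvt : N.mulVec vt = (Sig⁻¹ * Uᵀ).mulVec b := by
    rw [hvtdef, mulVec_mulVec, ← Matrix.mul_assoc, mul_nonsing_inv N hNdet, Matrix.one_mul]
  have hPv : P.mulVec v = (Sig⁻¹ * Uᵀ).mulVec b := by
    rw [hv, mulVec_mulVec, ← Matrix.mul_assoc, ← Matrix.mul_assoc,
      mul_nonsing_inv P hPdet, Matrix.one_mul]
  have hNw : N.mulVec (vt - v) = v - M.mulVec v := by
    rw [mulVec_sub, hNvt, ← hPv, ← sub_mulVec]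
    have hPN : P - N = 1 - M := by rw [hPdef, hNdef]; abel
    rw [hPN, sub_mulVec, one_mulVec]
  -- isometry of V
  have hisoV : ∀ u : Fin ρ → ℝ, ∑ j, (V.mulVec u j) ^ 2 = ∑ i, (u i) ^ 2 := by
    intro u
    calc ∑ j, (V.mulVec u j) ^ 2 = (V.mulVec u) ⬝ᵥ (V.mulVec u) := by
          simp [dotProduct, pow_two]
      _ = ((V.mulVec u) ᵥ* V) ⬝ᵥ u := dotProduct_mulVec _ V u
      _ = (Vᵀ.mulVec (V.mulVec u)) ⬝ᵥ u := by rw [← mulVec_transpose]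
      _ = u ⬝ᵥ u := by rw [mulVec_mulVec, hV, one_mulVec]
      _ = ∑ i, (u i) ^ 2 := by simp [dotProduct, pow_two]
  -- operator norm bound
  have hop : ∀ u : Fin ρ → ℝ,
      Real.sqrt (∑ i, ((M - 1).mulVec u i) ^ 2) ≤ 1 / 2 * Real.sqrt (∑ i, (u i) ^ 2) := by
    intro u
    have hnorm : ∀ z : Fin ρ → ℝ,
        ‖(WithLp.equiv 2 (Fin ρ → ℝ)).symm z‖ = Real.sqrt (∑ i, (z i) ^ 2) := by
      intro z
      rw [EuclideanSpace.norm_eq]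
      congr 1
      refine Finset.sum_congr rfl fun i _ => ?_
      rw [WithLp.equiv_symm_apply, WithLp.ofLp_toLp, Real.norm_eq_abs, sq_abs]
    have h1 := (LinearMap.toContinuousLinearMap
        (Matrix.toEuclideanLin (M - 1) :
          EuclideanSpace ℝ (Fin ρ) →ₗ[ℝ] EuclideanSpace ℝ (Fin ρ))).le_of_opNorm_le hSE
        ((WithLp.equiv 2 (Fin ρ → ℝ)).symm u)
    have h2 : (LinearMap.toContinuousLinearMap
        (Matrix.toEuclideanLin (M - 1) :
          EuclideanSpace ℝ (Fin ρ) →ₗ[ℝ] EuclideanSpace ℝ (Fin ρ)))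
        ((WithLp.equiv 2 (Fin ρ → ℝ)).symm u)
        = (WithLp.equiv 2 (Fin ρ → ℝ)).symm ((M - 1).mulVec u) := by
      rw [LinearMap.coe_toContinuousLinearMap']
      exact toEuclideanLin_apply_piLp_toLp (M - 1) u
    rw [h2, hnorm, hnorm] at h1
    exact h1
  -- main estimate on u := vt - v
  set u : Fin ρ → ℝ := vt - v with hudef
  have hbound : Real.sqrt (∑ i, (u i) ^ 2)
      ≤ 2 * Real.sqrt (∑ i, (N.mulVec u i) ^ 2) := by
    have hNu : N.mulVec u = u + ((M - 1).mulVec u + Q.mulVec u) := by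
      have hstruct : N = 1 + ((M - 1) + Q) := by rw [hNdef]; abel
      rw [hstruct, add_mulVec, add_mulVec, one_mulVec]
    have hQu : 0 ≤ ∑ i, Q.mulVec u i * u i := by
      refine Finset.sum_nonneg fun i _ => ?_
      rw [hQd, mulVec_diagonal, mul_assoc]
      exact mul_nonneg (by positivity) (mul_self_nonneg _)
    have hau : -(1 / 2) * (∑ i, (u i) ^ 2) ≤ ∑ i, (M - 1).mulVec u i * u i := by
      have hcs := sumCS (fun i => -((M - 1).mulVec u i)) u
      have hsq : ∑ i, (-((M - 1).mulVec u i)) ^ 2 = ∑ i, ((M - 1).mulVec u i) ^ 2 := by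
        refine Finset.sum_congr rfl fun i _ => ?_; rw [neg_sq]
      rw [hsq] at hcs
      have hneg : ∑ i, (-((M - 1).mulVec u i)) * u i = -(∑ i, (M - 1).mulVec u i * u i) := by
        rw [← Finset.sum_neg_distrib]
        exact Finset.sum_congr rfl fun i _ => by ring
      rw [hneg] at hcs
      have hmul : Real.sqrt (∑ i, ((M - 1).mulVec u i) ^ 2) * Real.sqrt (∑ i, (u i) ^ 2)
          ≤ (1 / 2 * Real.sqrt (∑ i, (u i) ^ 2)) * Real.sqrt (∑ i, (u i) ^ 2) :=
        mul_le_mul_of_nonneg_right (hop u) (Real.sqrt_nonneg _)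
      have hss : Real.sqrt (∑ i, (u i) ^ 2) * Real.sqrt (∑ i, (u i) ^ 2) = ∑ i, (u i) ^ 2 :=
        Real.mul_self_sqrt (Finset.sum_nonneg fun i _ => sq_nonneg _)
      nlinarith [hcs, hmul, hss]
    have hlow : (1 / 2) * (∑ i, (u i) ^ 2) ≤ ∑ i, N.mulVec u i * u i := by
      have hexp : ∑ i, N.mulVec u i * u i
          = (∑ i, u i * u i) + ((∑ i, (M - 1).mulVec u i * u i) + ∑ i, Q.mulVec u i * u i) := by
        rw [hNu]
        rw [← Finset.sum_add_distrib, ← Finset.sum_add_distrib]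
        refine Finset.sum_congr rfl fun i _ => ?_
        simp [Pi.add_apply]
        ring
      rw [hexp]
      have husq : ∑ i, u i * u i = ∑ i, (u i) ^ 2 :=
        Finset.sum_congr rfl fun i _ => (pow_two (u i)).symm
      nlinarith [hau, hQu, husq]
    have hcs2 : ∑ i, N.mulVec u i * u i
        ≤ Real.sqrt (∑ i, (N.mulVec u i) ^ 2) * Real.sqrt (∑ i, (u i) ^ 2) :=
      sumCS _ _
    rcases eq_or_lt_of_le (Finset.sum_nonneg fun i (_ : i ∈ Finset.univ) => sq_nonneg (u i)) with h0 | h0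
    · rw [← h0, Real.sqrt_zero]
      positivity
    · have hs : 0 < Real.sqrt (∑ i, (u i) ^ 2) := Real.sqrt_pos.mpr h0
      have hss : Real.sqrt (∑ i, (u i) ^ 2) * Real.sqrt (∑ i, (u i) ^ 2) = ∑ i, (u i) ^ 2 :=
        Real.mul_self_sqrt (le_of_lt h0)
      nlinarith [hlow, hcs2, hs, hss, Real.sqrt_nonneg (∑ i, (N.mulVec u i) ^ 2)]
  -- conclude
  have hNwsum : ∑ i, (N.mulVec u i) ^ 2 = ∑ i, (M.mulVec v i - v i) ^ 2 := by
    rw [hudef, hNw]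
    refine Finset.sum_congr rfl fun i _ => ?_
    rw [Pi.sub_apply, ← neg_sub, neg_sq]
  have hfinal : Real.sqrt (∑ i, (u i) ^ 2) ≤ 2 * Real.sqrt ε * Real.sqrt (∑ i, (v i) ^ 2) := by
    calc Real.sqrt (∑ i, (u i) ^ 2) ≤ 2 * Real.sqrt (∑ i, (N.mulVec u i) ^ 2) := hbound
      _ = 2 * Real.sqrt (∑ i, (M.mulVec v i - v i) ^ 2) := by rw [hNwsum]
      _ ≤ 2 * (Real.sqrt ε * Real.sqrt (∑ i, (v i) ^ 2)) := by
          have := hAMM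
          linarith
      _ = 2 * Real.sqrt ε * Real.sqrt (∑ i, (v i) ^ 2) := by ring
  have hdiff : ∀ j, xt j - xstar j = V.mulVec u j := by
    intro j
    rw [hxtv, hxstarv, hudef, mulVec_sub]
    rfl
  have hLHS : ∑ j, (xt j - xstar j) ^ 2 = ∑ i, (u i) ^ 2 := by
    rw [show (∑ j, (xt j - xstar j) ^ 2) = ∑ j, (V.mulVec u j) ^ 2 from
      Finset.sum_congr rfl fun j _ => by rw [hdiff]]
    exact hisoV u
  have hRHS : ∑ j, xstar j ^ 2 = ∑ i, (v i) ^ 2 := by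
    rw [show (∑ j, xstar j ^ 2) = ∑ j, (V.mulVec v j) ^ 2 from
      Finset.sum_congr rfl fun j _ => by rw [hxstarv]]
    exact hisoV v
  rw [hLHS, hRHS]
  exact hfinal
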